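/- Let F : ℝ² → ℝ² be differentiable, let M be an invertible 2×2 real matrix with det M = 1, and set G = F ∘ M⁻¹ (i.e. G(y) = F(M⁻¹y)). For y ∈ ℝ² let DF(y), DG(y) denote the 2×2 Jacobian matrices of F and G at y, and let ‖·‖ be the Euclidean norm. If x : ℝ → ℝ² satisfies, for every t in an interval I, that x has derivative −(1 + ‖F(x(t))‖⁴)⁻¹ · adj(DF(x(t))) · F(x(t)) at t, then y(t) := M·x(t) satisfies, for every t ∈ I, that y has derivative −(1 + ‖G(y(t))‖⁴)⁻¹ · adj(DG(y(t))) · G(y(t)) at t. Thus a unimodular linear change of coordinates maps trajectories of the desingularized Newton system for F onto trajectories of the desingularized Newton system for G. -/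
import Mathlib

open Matrix

lemma myEucMul (A B : Matrix (Fin 2) (Fin 2) ℝ) (v : EuclideanSpace ℝ (Fin 2)) :
    Matrix.toEuclideanLin (A * B) v = Matrix.toEuclideanLin A (Matrix.toEuclideanLin B v) := by
  simp [Matrix.toEuclideanLin_apply, Matrix.mulVec_mulVec]

theorem newton_system_unimodular_invariance
    (F G : EuclideanSpace ℝ (Fin 2) → EuclideanSpace ℝ (Fin 2))
    (DF DG : EuclideanSpace ℝ (Fin 2) → Matrix (Fin 2) (Fin 2) ℝ)
    (hDF : ∀ y, HasFDerivAt F (LinearMap.toContinuousLinearMap (Matrix.toEuclideanLin (DF y))) y)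
    (hDG : ∀ y, HasFDerivAt G (LinearMap.toContinuousLinearMap (Matrix.toEuclideanLin (DG y))) y)
    (M : Matrix (Fin 2) (Fin 2) ℝ) (hM : IsUnit M) (hdet : M.det = 1)
    (hG : ∀ y, G y = F (Matrix.toEuclideanLin M⁻¹ y))
    (I : Set ℝ) (hI : I.OrdConnected)
    (x : ℝ → EuclideanSpace ℝ (Fin 2))
    (hx : ∀ t ∈ I, HasDerivAt x
      ((-(1 + ‖F (x t)‖ ^ 4)⁻¹) •
        (Matrix.toEuclideanLin (DF (x t)).adjugate (F (x t)))) t) :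
    ∀ t ∈ I, HasDerivAt (fun s => Matrix.toEuclideanLin M (x s))
      ((-(1 + ‖G (Matrix.toEuclideanLin M (x t))‖ ^ 4)⁻¹) •
        (Matrix.toEuclideanLin (DG (Matrix.toEuclideanLin M (x t))).adjugate
          (G (Matrix.toEuclideanLin M (x t))))) t := by
  intro t ht
  have hMdet : IsUnit M.det := by rw [hdet]; exact isUnit_one
  have hinv : M⁻¹ * M = 1 := Matrix.nonsing_inv_mul M hMdet
  set p := x t with hp
  set y := Matrix.toEuclideanLin M p with hy
  have hback : Matrix.toEuclideanLin M⁻¹ y = p := by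
    rw [hy, ← myEucMul, hinv]
    simp [Matrix.toEuclideanLin_apply]
  have hGy : G y = F p := by rw [hG, hback]
  -- DG y = DF p * M⁻¹
  have hfun : G = fun z => F (Matrix.toEuclideanLin M⁻¹ z) := funext hG
  have hMinvCLM : HasFDerivAt (fun z => Matrix.toEuclideanLin M⁻¹ z)
      (LinearMap.toContinuousLinearMap (Matrix.toEuclideanLin M⁻¹)) y :=
    (LinearMap.toContinuousLinearMap (Matrix.toEuclideanLin M⁻¹)).hasFDerivAt
  have hcomp : HasFDerivAt G
      ((LinearMap.toContinuousLinearMap (Matrix.toEuclideanLin (DF p))).comp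
        (LinearMap.toContinuousLinearMap (Matrix.toEuclideanLin M⁻¹))) y := by
    rw [hfun]
    have h := (hDF (Matrix.toEuclideanLin M⁻¹ y)).comp y hMinvCLM
    rw [hback] at h
    exact h
  have hDGeq : DG y = DF p * M⁻¹ := by
    have := (hDG y).unique hcomp
    have h2 : Matrix.toEuclideanLin (DG y) = Matrix.toEuclideanLin (DF p * M⁻¹) := by
      apply LinearMap.ext
      intro v
      have h3 := ContinuousLinearMap.ext_iff.mp this v
      simpa [myEucMul] using h3
    exact Matrix.toEuclideanLin.injective h2
  have hadjMinv : (M⁻¹).adjugate = M := by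
    have hdetinv : (M⁻¹).det = 1 := by rw [Matrix.det_nonsing_inv, hdet]; simp
    have := Matrix.mul_adjugate M⁻¹
    rw [hdetinv, one_smul] at this
    calc (M⁻¹).adjugate = (M * M⁻¹) * (M⁻¹).adjugate := by
            rw [Matrix.mul_nonsing_inv M hMdet, Matrix.one_mul]
      _ = M * (M⁻¹ * (M⁻¹).adjugate) := by rw [Matrix.mul_assoc]
      _ = M := by rw [this, Matrix.mul_one]
  have hadj : (DG y).adjugate = M * (DF p).adjugate := by
    rw [hDGeq, Matrix.adjugate_mul_distrib, hadjMinv]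
  -- derivative
  have hd := hx t ht
  have hder : HasDerivAt (fun s => Matrix.toEuclideanLin M (x s))
      (Matrix.toEuclideanLin M ((-(1 + ‖F p‖ ^ 4)⁻¹) •
        (Matrix.toEuclideanLin (DF p).adjugate (F p)))) t :=
    (LinearMap.toContinuousLinearMap (Matrix.toEuclideanLin M)).hasFDerivAt.comp_hasDerivAt t hd
  convert hder using 1
  rw [hGy, hadj, myEucMul, (Matrix.toEuclideanLin M).map_smul]
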